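/- Let B(0,2) ⊆ ℝ² be the open ball of radius 2 and let v : B(0,2) → ℝ be differentiable at every point. Let b ∈ ℝ, a ∈ ℝ², set P(x) = b + a·x, and let μ ≥ 0 satisfy |v(x) − P(x)| ≤ μ for all x ∈ B(0,2). Assume furthermore that |Dv(x)| ≤ |a| + 2μ for all x ∈ B(0,1). Then the average (1/|B(0,1)|) ∫_{B(0,1)} |Dv − a|² dx ≤ 20 μ (|a| + μ). -/

import Mathlib

open Real MeasureTheory
open scoped RealInnerProductSpace

noncomputable section

/-- The Euclidean plane ℝ². -/
abbrev E2 : Type := EuclideanSpace ℝ (Fin 2)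

/-- Standard basis vector. -/
def ee (i : Fin 2) : E2 := EuclideanSpace.single i (1 : ℝ)

/-- Partial derivative ∂ᵢf. -/
def pd (i : Fin 2) (f : E2 → ℝ) (x : E2) : ℝ := fderiv ℝ f x (ee i)

/-- Second partial derivative ∂ᵢ∂ⱼf. -/
def pd2 (i j : Fin 2) (f : E2 → ℝ) (x : E2) : ℝ := pd i (pd j f) x

/-- |Df|², squared Euclidean norm of the gradient. -/
def gradSq (f : E2 → ℝ) (x : E2) : ℝ := (pd 0 f x) ^ 2 + (pd 1 f x) ^ 2

/-- |Df|, Euclidean norm of the gradient. -/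
def gradNorm (f : E2 → ℝ) (x : E2) : ℝ := Real.sqrt (gradSq f x)

/-- Laplacian Δf = tr D²f. -/
def lap (f : E2 → ℝ) (x : E2) : ℝ := pd2 0 0 f x + pd2 1 1 f x

/-- ∞-Laplacian Δ∞f = D²f Df · Df. -/
def infLap (f : E2 → ℝ) (x : E2) : ℝ :=
  pd2 0 0 f x * pd 0 f x * pd 0 f x + pd2 0 1 f x * pd 0 f x * pd 1 f x +
  pd2 1 0 f x * pd 1 f x * pd 0 f x + pd2 1 1 f x * pd 1 f x * pd 1 f x

/-- |D²f|², squared Frobenius norm of the Hessian. -/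
def hessFrobSq (f : E2 → ℝ) (x : E2) : ℝ :=
  (pd2 0 0 f x) ^ 2 + (pd2 0 1 f x) ^ 2 + (pd2 1 0 f x) ^ 2 + (pd2 1 1 f x) ^ 2

/-- det D²f, determinant of the Hessian. -/
def detHess (f : E2 → ℝ) (x : E2) : ℝ :=
  pd2 0 0 f x * pd2 1 1 f x - pd2 0 1 f x * pd2 1 0 f x

/-- |D²f Df|². -/
def hessGradSq (f : E2 → ℝ) (x : E2) : ℝ :=
  (pd2 0 0 f x * pd 0 f x + pd2 0 1 f x * pd 1 f x) ^ 2 +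
  (pd2 1 0 f x * pd 0 f x + pd2 1 1 f x * pd 1 f x) ^ 2

/-- Jacobian determinant of the planar map with components `F 0`, `F 1`. -/
def jdet (F : Fin 2 → E2 → ℝ) (x : E2) : ℝ :=
  pd 0 (F 0) x * pd 1 (F 1) x - pd 1 (F 0) x * pd 0 (F 1) x

/-- Squared Frobenius norm of the Jacobian of the planar map with components `F 0`, `F 1`. -/
def jFrobSq (F : Fin 2 → E2 → ℝ) (x : E2) : ℝ :=
  (pd 0 (F 0) x) ^ 2 + (pd 1 (F 0) x) ^ 2 + (pd 0 (F 1) x) ^ 2 + (pd 1 (F 1) x) ^ 2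

/-- Df · Dg. -/
def gradDot (f g : E2 → ℝ) (x : E2) : ℝ :=
  pd 0 f x * pd 0 g x + pd 1 f x * pd 1 g x

/-- D²ψ Dv · Dv. -/
def hessQuad (ψ v : E2 → ℝ) (x : E2) : ℝ :=
  pd2 0 0 ψ x * pd 0 v x * pd 0 v x + pd2 0 1 ψ x * pd 0 v x * pd 1 v x +
  pd2 1 0 ψ x * pd 1 v x * pd 0 v x + pd2 1 1 ψ x * pd 1 v x * pd 1 v x

/-- (D²v Dv) · Dψ. -/
def hessGradDot (v ψ : E2 → ℝ) (x : E2) : ℝ :=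
  (pd2 0 0 v x * pd 0 v x + pd2 0 1 v x * pd 1 v x) * pd 0 ψ x +
  (pd2 1 0 v x * pd 0 v x + pd2 1 1 v x * pd 1 v x) * pd 1 ψ x

/-- Smooth compactly supported test function on Ω. -/
def IsTestOn (ψ : E2 → ℝ) (Ω : Set E2) : Prop :=
  ContDiff ℝ (⊤ : ℕ∞) ψ ∧ HasCompactSupport ψ ∧ tsupport ψ ⊆ Ω

/-- Components of W = |Dv|⁻¹ Dv. -/
def Wcomp (v : E2 → ℝ) (i : Fin 2) : E2 → ℝ := fun y => (gradNorm v y)⁻¹ * pd i v y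

lemma aux_integrableOn_of_bound {α : Type*} [MeasurableSpace α] {μ : Measure α} {f : α → ℝ}
    {s : Set α} (hs : MeasurableSet s) (hμ : μ s < ⊤) (hf : Measurable f) (M : ℝ)
    (hM : ∀ x ∈ s, |f x| ≤ M) : IntegrableOn f s μ := by
  refine Integrable.mono' (g := fun _ => M) (integrableOn_const hμ.ne)
    hf.aestronglyMeasurable ?_
  exact (ae_restrict_iff' hs).mpr (Filter.Eventually.of_forall fun x hx => by
    simpa [Real.norm_eq_abs] using hM x hx)

lemma aux_slice (v : E2 → ℝ)
    (hv : ∀ x ∈ Metric.ball (0 : E2) 2, DifferentiableAt ℝ v x)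
    (b : ℝ) (a : E2) (μ : ℝ) (hμ : 0 ≤ μ)
    (hclose : ∀ x ∈ Metric.ball (0 : E2) 2, |v x - (b + ⟪a, x⟫)| ≤ μ)
    (hfd : ∀ x ∈ Metric.ball (0 : E2) 1, ∀ y : E2, |fderiv ℝ v x y| ≤ (‖a‖ + 2*μ) * ‖y‖)
    (e : E2) (he1 : ‖e‖ = 1) (hea : a = ‖a‖ • e)
    (T : ℝ × ℝ → E2) (hTn : ∀ p : ℝ × ℝ, ‖T p‖ = Real.sqrt (p.1^2 + p.2^2))
    (hTi : ∀ p : ℝ × ℝ, ⟪a, T p⟫ = ‖a‖ * p.2)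
    (hTline : ∀ t s : ℝ, T (t, s) = T (t, 0) + s • e)
    (hTcont : Continuous T)
    (t : ℝ) (ht : t ∈ Set.Ioo (-1:ℝ) 1) :
    ∫ s in Set.Ioo (-(Real.sqrt (1 - t^2))) (Real.sqrt (1 - t^2)),
      (‖a‖^2 - fderiv ℝ v (T (t,s)) a) ≤ 2*μ*‖a‖ := by
  set S := Real.sqrt (1 - t^2) with hS
  have ht2 : t^2 < 1 := by nlinarith [ht.1, ht.2]
  have hS2 : S^2 = 1 - t^2 := Real.sq_sqrt (by linarith)
  have hSpos : 0 < S := Real.sqrt_pos.mpr (by linarith)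
  -- membership facts
  have hmem2 : ∀ s : ℝ, s^2 ≤ S^2 → T (t,s) ∈ Metric.ball (0:E2) 2 := by
    intro s hs
    rw [Metric.mem_ball, dist_zero_right, hTn]
    have h1 : t^2 + s^2 ≤ 1 := by nlinarith
    calc Real.sqrt (t^2 + s^2) ≤ Real.sqrt 1 := Real.sqrt_le_sqrt h1
    _ < 2 := by rw [Real.sqrt_one]; norm_num
  have hmem1 : ∀ s ∈ Set.Ioo (-S) S, T (t,s) ∈ Metric.ball (0:E2) 1 := by
    intro s hs
    rw [Metric.mem_ball, dist_zero_right, hTn]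
    have h1 : s^2 < S^2 := by nlinarith [hs.1, hs.2]
    have h2 : t^2 + s^2 < 1 := by nlinarith
    rw [Real.sqrt_lt' one_pos]
    simpa using h2
  -- derivative along the chord
  have hhd : ∀ s : ℝ, T (t,s) ∈ Metric.ball (0:E2) 2 →
      HasDerivAt (fun s' => v (T (t, s'))) (fderiv ℝ v (T (t,s)) e) s := by
    intro s hmem
    have h1 : HasDerivAt (fun s' : ℝ => T (t, s')) e s := by
      have h0 : (fun s' : ℝ => T (t, s')) = fun s' => T (t, 0) + s' • e :=
        funext fun s' => hTline t s'
      rw [h0]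
      simpa using ((hasDerivAt_id s).smul_const e).const_add (T (t, 0))
    have h2 := ((hv _ hmem).hasFDerivAt).comp_hasDerivAt s h1
    exact h2
  -- integrability of the directional derivative on the chord
  have hgmeas : Measurable (fun s : ℝ => fderiv ℝ v (T (t,s)) e) :=
    (measurable_fderiv_apply_const ℝ v e).comp
      (hTcont.comp (Continuous.prodMk_right t)).measurable
  have hgOn : IntegrableOn (fun s : ℝ => fderiv ℝ v (T (t,s)) e) (Set.Ioo (-S) S) := by
    refine aux_integrableOn_of_bound measurableSet_Ioo measure_Ioo_lt_top hgmeas (‖a‖ + 2*μ) ?_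
    intro s hs
    have := hfd (T (t,s)) (hmem1 s hs) e
    simpa [he1] using this
  have hgint : IntervalIntegrable (fun s : ℝ => fderiv ℝ v (T (t,s)) e) volume (-S) S := by
    rw [intervalIntegrable_iff, Set.uIoc_of_le (by linarith : -S ≤ S)]
    rw [IntegrableOn, ← Measure.restrict_congr_set Ioo_ae_eq_Ioc]
    exact hgOn
  -- FTC
  have hftc : ∫ s in Set.Ioo (-S) S, fderiv ℝ v (T (t,s)) e
      = v (T (t, S)) - v (T (t, -S)) := by
    have h := intervalIntegral.integral_eq_sub_of_hasDerivAt
      (f := fun s => v (T (t,s))) (f' := fun s => fderiv ℝ v (T (t,s)) e) ?_ hgint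
    · rw [intervalIntegral.integral_of_le (by linarith : -S ≤ S),
        integral_Ioc_eq_integral_Ioo] at h
      exact h
    · intro s hs
      rw [Set.uIcc_of_le (by linarith : -S ≤ S)] at hs
      exact hhd s (hmem2 s (by nlinarith [hs.1, hs.2]))
  -- endpoint bounds
  have hendS := hclose _ (hmem2 S (le_refl _))
  have hendS' := hclose _ (hmem2 (-S) (by rw [neg_pow]; norm_num))
  rw [abs_le] at hendS hendS'
  have hiS : ⟪a, T (t, S)⟫ = ‖a‖ * S := hTi (t, S)
  have hiS' : ⟪a, T (t, -S)⟫ = ‖a‖ * (-S) := hTi (t, -S)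
  rw [hiS] at hendS
  rw [hiS'] at hendS'
  -- rewrite integrand
  have hfa : ∀ s : ℝ, fderiv ℝ v (T (t,s)) a = ‖a‖ * fderiv ℝ v (T (t,s)) e := by
    intro s
    conv_lhs => rw [hea]
    rw [ContinuousLinearMap.map_smul]
    simp [smul_eq_mul]
  have hsplit : ∫ s in Set.Ioo (-S) S, (‖a‖^2 - fderiv ℝ v (T (t,s)) a)
      = ‖a‖^2 * (2*S) - ‖a‖ * (v (T (t, S)) - v (T (t, -S))) := by
    simp_rw [hfa]
    rw [integral_sub (integrableOn_const (C := ‖a‖^2) measure_Ioo_lt_top.ne)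
      (hgOn.const_mul (‖a‖))]
    rw [integral_const_mul, hftc, setIntegral_const]
    rw [measureReal_def, Real.volume_Ioo, smul_eq_mul]
    rw [ENNReal.toReal_ofReal (by linarith)]
    ring
  rw [hsplit]
  have hna : (0:ℝ) ≤ ‖a‖ := norm_nonneg a
  nlinarith [hendS.1, hendS'.2, mul_le_mul_of_nonneg_left hendS.1 hna]

set_option maxHeartbeats 1000000 in
lemma aux_key (v : E2 → ℝ)
    (hv : ∀ x ∈ Metric.ball (0 : E2) 2, DifferentiableAt ℝ v x)
    (b : ℝ) (a : E2) (μ : ℝ) (hμ : 0 ≤ μ)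
    (hclose : ∀ x ∈ Metric.ball (0 : E2) 2, |v x - (b + ⟪a, x⟫)| ≤ μ)
    (hfd : ∀ x ∈ Metric.ball (0 : E2) 1, ∀ y : E2, |fderiv ℝ v x y| ≤ (‖a‖ + 2*μ) * ‖y‖) :
    ∫ x in Metric.ball (0:E2) 1, (‖a‖^2 - fderiv ℝ v x a) ≤ 4*μ*‖a‖ := by
  rcases eq_or_ne a 0 with rfl | ha
  · simp
  have hna : (0:ℝ) < ‖a‖ := norm_pos_iff.mpr ha
  set e : E2 := ‖a‖⁻¹ • a with he
  have he1 : ‖e‖ = 1 := by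
    rw [he, norm_smul, norm_inv, norm_norm, inv_mul_cancel₀ hna.ne']
  have hea : a = ‖a‖ • e := by
    rw [he, smul_smul, mul_inv_cancel₀ hna.ne', one_smul]
  set J : ℂ ≃ₗᵢ[ℝ] E2 := Complex.orthonormalBasisOneI.repr with hJ
  set c : ℂ := J.symm e with hc
  have hc1 : ‖c‖ = 1 := by rw [hc, LinearIsometryEquiv.norm_map, he1]
  have hJc : J c = e := by rw [hc]; exact J.apply_symm_apply e
  set u : Circle := ⟨c, by simp [Submonoid.unitSphere, mem_sphere_zero_iff_norm, hc1]⟩ with hu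
  set T : ℝ × ℝ → E2 := fun p => J (c * (p.2 + p.1 * Complex.I)) with hT
  have hTcont : Continuous T := by
    apply J.continuous.comp
    fun_prop
  -- function identity with the measure-preserving composition
  have hfun : (⇑J ∘ ⇑(rotation u) ∘ ⇑Complex.measurableEquivRealProd.symm ∘ Prod.swap) = T := by
    funext p
    simp only [Function.comp_apply, Prod.swap, rotation_apply, hT]
    congr 2
    rw [Complex.measurableEquivRealProd_symm_apply]
    apply Complex.ext <;> simp
  have hTmp : MeasurePreserving T volume volume := by
    have h1 : MeasurePreserving (Prod.swap : ℝ×ℝ → ℝ×ℝ) volume volume := by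
      rw [Measure.volume_eq_prod]
      exact Measure.measurePreserving_swap
    have h2 := Complex.volume_preserving_equiv_real_prod.symm
    have h3 := (rotation u).measurePreserving
    have h4 := J.measurePreserving
    have hcomp := h4.comp (h3.comp (h2.comp h1))
    rwa [hfun] at hcomp
  have hTemb : MeasurableEmbedding T := by
    rw [← hfun]
    exact (J.toHomeomorph.toMeasurableEquiv.measurableEmbedding).comp
      (((rotation u).toHomeomorph.toMeasurableEquiv.measurableEmbedding).comp
        ((Complex.measurableEquivRealProd.symm.measurableEmbedding).comp
          (MeasurableEquiv.prodComm.measurableEmbedding)))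
  -- norm of T
  have hTn : ∀ p : ℝ × ℝ, ‖T p‖ = Real.sqrt (p.1^2 + p.2^2) := by
    intro p
    rw [hT]
    simp only
    rw [LinearIsometryEquiv.norm_map, norm_mul, hc1, one_mul, Complex.norm_def]
    congr 1
    rw [add_comm (p.1^2)]
    rw [show ((p.2:ℂ) + p.1 * Complex.I) = Complex.mk p.2 p.1 from by
      apply Complex.ext <;> simp]
    simp [Complex.normSq_mk, sq]
  -- inner product with a
  have hTi : ∀ p : ℝ × ℝ, ⟪a, T p⟫ = ‖a‖ * p.2 := by
    intro p
    conv_lhs => rw [hea, real_inner_smul_left]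
    congr 1
    have : (⟪e, T p⟫ : ℝ) = ⟪J c, J (c * (p.2 + p.1 * Complex.I))⟫ := by rw [hJc, hT]
    rw [this, LinearIsometryEquiv.inner_map_map, Complex.inner]
    have hcc : (starRingEnd ℂ) c * (c * ((p.2:ℂ) + p.1 * Complex.I))
        = ((p.2:ℂ) + p.1 * Complex.I) := by
      rw [← mul_assoc, mul_comm ((starRingEnd ℂ) c) c, Complex.mul_conj]
      have : Complex.normSq c = 1 := by
        rw [Complex.normSq_eq_norm_sq, hc1, one_pow]
      rw [this]
      simp
    rw [mul_comm, hcc]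
    simp
  -- chord line structure
  have hTline : ∀ t s : ℝ, T (t, s) = T (t, 0) + s • e := by
    intro t s
    rw [hT]
    simp only
    have harg : c * ((s:ℝ) + (t:ℝ) * Complex.I)
        = c * (((0:ℝ):ℂ) + t * Complex.I) + s • c := by
      rw [Complex.real_smul]; push_cast; ring
    rw [harg, map_add, LinearIsometryEquiv.map_smul, hJc]
  set D : Set (ℝ×ℝ) := {p : ℝ×ℝ | p.1^2 + p.2^2 < 1} with hD
  have hball : ∀ p : ℝ×ℝ, T p ∈ Metric.ball (0:E2) 1 ↔ p ∈ D := by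
    intro p
    rw [Metric.mem_ball, dist_zero_right, hTn, Real.sqrt_lt' one_pos, one_pow]
    exact Iff.rfl
  have hpre : T ⁻¹' (Metric.ball (0:E2) 1) = D := by
    ext p; rw [Set.mem_preimage, hball]
  have hDmeas : MeasurableSet D := by
    have : IsOpen D := isOpen_lt (by fun_prop) continuous_const
    exact this.measurableSet
  have hvol2 : volume (Metric.ball (0:E2) 1) = ENNReal.ofReal π := by
    rw [EuclideanSpace.volume_ball]
    norm_num [Real.Gamma_two, Real.sq_sqrt Real.pi_nonneg]
  have hDvol : volume D < ⊤ := by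
    rw [← hpre, hTmp.measure_preimage measurableSet_ball.nullMeasurableSet, hvol2]
    exact ENNReal.ofReal_lt_top
  set F : ℝ×ℝ → ℝ := fun p => ‖a‖^2 - fderiv ℝ v (T p) a with hF
  have hFmeas : Measurable F :=
    measurable_const.sub ((measurable_fderiv_apply_const ℝ v a).comp hTcont.measurable)
  have hFint : IntegrableOn F D := by
    refine aux_integrableOn_of_bound hDmeas hDvol hFmeas (‖a‖^2 + (‖a‖ + 2*μ)*‖a‖) ?_
    intro p hp
    have hb := hfd (T p) ((hball p).mpr hp) a
    rw [hF]
    simp only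
    rw [abs_le] at hb ⊢
    constructor <;> nlinarith [sq_nonneg ‖a‖, hb.1, hb.2]
  have hGint : Integrable (D.indicator F) := (integrable_indicator_iff hDmeas).mpr hFint
  have hGint' : Integrable (D.indicator F) ((volume : Measure ℝ).prod volume) := by
    rwa [← Measure.volume_eq_prod]
  have step1 : ∫ x in Metric.ball (0:E2) 1, (‖a‖^2 - fderiv ℝ v x a) = ∫ p in D, F p := by
    rw [← hpre]
    exact (hTmp.setIntegral_preimage_emb hTemb (fun x => ‖a‖^2 - fderiv ℝ v x a) _).symm
  have step2 : ∫ p in D, F p = ∫ t : ℝ, ∫ s : ℝ, (D.indicator F) (t, s) := by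
    rw [← integral_indicator hDmeas]
    rw [show (volume : Measure (ℝ×ℝ)) = (volume : Measure ℝ).prod volume from
      Measure.volume_eq_prod ℝ ℝ]
    exact integral_prod _ hGint'
  have step3 : ∀ t : ℝ, ∫ s : ℝ, (D.indicator F) (t, s)
      ≤ (Set.Ioo (-1:ℝ) 1).indicator (fun _ => 2*μ*‖a‖) t := by
    intro t
    by_cases ht : t ∈ Set.Ioo (-1:ℝ) 1
    · rw [Set.indicator_of_mem ht]
      set S := Real.sqrt (1 - t^2) with hS
      have ht2 : t^2 < 1 := by nlinarith [ht.1, ht.2]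
      have hS2 : S^2 = 1 - t^2 := Real.sq_sqrt (by linarith)
      have hSpos : 0 < S := Real.sqrt_pos.mpr (by linarith)
      have hsec : (fun s : ℝ => (D.indicator F) (t, s))
          = (Set.Ioo (-S) S).indicator (fun s => F (t, s)) := by
        funext s
        have hm : (t, s) ∈ D ↔ s ∈ Set.Ioo (-S) S := by
          constructor
          · intro hp
            have hps : t^2 + s^2 < 1 := hp
            have h1 : s^2 < S^2 := by nlinarith
            constructor
            · nlinarith [sq_nonneg (s + S)]
            · nlinarith [sq_nonneg (s - S)]
          · intro hs
            have h1 : s^2 < S^2 := by nlinarith [hs.1, hs.2]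
            show t^2 + s^2 < 1
            nlinarith
        by_cases hp : (t, s) ∈ D
        · rw [Set.indicator_of_mem hp, Set.indicator_of_mem (hm.mp hp)]
        · rw [Set.indicator_of_notMem hp, Set.indicator_of_notMem (fun hs => hp (hm.mpr hs))]
      rw [hsec, integral_indicator measurableSet_Ioo]
      exact aux_slice v hv b a μ hμ hclose hfd e he1 hea T hTn hTi hTline hTcont t ht
    · rw [Set.indicator_of_notMem ht]
      have hzero : (fun s : ℝ => (D.indicator F) (t, s)) = fun _ => (0:ℝ) := by
        funext s
        apply Set.indicator_of_notMem
        intro hp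
        have h1 : t^2 + s^2 < 1 := hp
        have h2 : 1 ≤ t^2 := by
          rw [Set.mem_Ioo, not_and_or, not_lt, not_lt] at ht
          rcases ht with h | h <;> nlinarith
        nlinarith [sq_nonneg s]
      rw [hzero, integral_zero]
  have step4 : ∫ t : ℝ, ∫ s : ℝ, (D.indicator F) (t, s) ≤ 4*μ*‖a‖ := by
    have hlhs : Integrable (fun t : ℝ => ∫ s : ℝ, (D.indicator F) (t, s)) :=
      hGint'.integral_prod_left
    have hrhs : Integrable ((Set.Ioo (-1:ℝ) 1).indicator (fun _ => 2*μ*‖a‖)) := by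
      rw [integrable_indicator_iff measurableSet_Ioo]
      exact integrableOn_const measure_Ioo_lt_top.ne
    calc ∫ t : ℝ, ∫ s : ℝ, (D.indicator F) (t, s)
        ≤ ∫ t : ℝ, (Set.Ioo (-1:ℝ) 1).indicator (fun _ => 2*μ*‖a‖) t :=
          integral_mono hlhs hrhs step3
      _ = 4*μ*‖a‖ := by
          rw [integral_indicator measurableSet_Ioo, setIntegral_const, measureReal_def, Real.volume_Ioo]
          rw [smul_eq_mul, ENNReal.toReal_ofReal (by norm_num : (0:ℝ) ≤ 1 - (-1))]
          ring
  rw [step1, step2]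
  exact step4

/-- Lemma 2.7 with r = 1: L² closeness of the gradient to the affine slope. -/
theorem stmt_7 (v : E2 → ℝ)
    (hv : ∀ x ∈ Metric.ball (0 : E2) 2, DifferentiableAt ℝ v x)
    (b : ℝ) (a : E2) (μ : ℝ) (hμ : 0 ≤ μ)
    (hclose : ∀ x ∈ Metric.ball (0 : E2) 2, |v x - (b + ⟪a, x⟫)| ≤ μ)
    (hgrad : ∀ x ∈ Metric.ball (0 : E2) 1, ‖gradient v x‖ ≤ ‖a‖ + 2 * μ) :
    (⨍ x in Metric.ball (0 : E2) 1, ‖gradient v x - a‖ ^ 2) ≤ 20 * μ * (‖a‖ + μ) := by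
  have hinner : ∀ (x y : E2), ⟪gradient v x, y⟫ = fderiv ℝ v x y := fun x y =>
    InnerProductSpace.toDual_symm_apply
  have ha0 : (0:ℝ) ≤ ‖a‖ := norm_nonneg a
  have hfd : ∀ x ∈ Metric.ball (0:E2) 1, ∀ y : E2, |fderiv ℝ v x y| ≤ (‖a‖ + 2*μ) * ‖y‖ := by
    intro x hx y
    rw [← hinner]
    refine (abs_real_inner_le_norm _ _).trans ?_
    exact mul_le_mul_of_nonneg_right (hgrad x hx) (norm_nonneg y)
  have key := aux_key v hv b a μ hμ hclose hfd
  have hvol : volume (Metric.ball (0:E2) 1) = ENNReal.ofReal π := by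
    rw [EuclideanSpace.volume_ball]
    norm_num [Real.Gamma_two, Real.sq_sqrt Real.pi_nonneg]
  have hvolR : (volume (Metric.ball (0:E2) 1)).toReal = π := by
    rw [hvol, ENNReal.toReal_ofReal Real.pi_pos.le]
  have hvolB : volume (Metric.ball (0:E2) 1) < ⊤ := by
    rw [hvol]; exact ENNReal.ofReal_lt_top
  have hπ3 : (3:ℝ) < π := Real.pi_gt_three
  -- pointwise bound
  have hptw : ∀ x ∈ Metric.ball (0:E2) 1,
      ‖gradient v x - a‖^2 ≤ (4*μ*‖a‖ + 4*μ^2) + 2*(‖a‖^2 - fderiv ℝ v x a) := by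
    intro x hx
    have h1 : ‖gradient v x - a‖^2 = ‖gradient v x‖^2 - 2*⟪gradient v x, a⟫ + ‖a‖^2 :=
      norm_sub_sq_real _ _
    have h2 : ⟪gradient v x, a⟫ = fderiv ℝ v x a := hinner x a
    have h3 : ‖gradient v x‖ ≤ ‖a‖ + 2*μ := hgrad x hx
    have h4 : ‖gradient v x‖^2 ≤ (‖a‖+2*μ)^2 := by nlinarith [norm_nonneg (gradient v x)]
    nlinarith
  -- integrability
  have hmeasgrad : Measurable (gradient v) :=
    ((InnerProductSpace.toDual ℝ E2).symm.continuous.measurable).comp (measurable_fderiv ℝ v)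
  have hqmeas : Measurable (fun x : E2 => ‖gradient v x - a‖^2) :=
    ((hmeasgrad.sub measurable_const).norm).pow_const 2
  have hqint : IntegrableOn (fun x : E2 => ‖gradient v x - a‖^2) (Metric.ball (0:E2) 1) := by
    refine aux_integrableOn_of_bound measurableSet_ball hvolB hqmeas ((2*‖a‖+2*μ)^2) ?_
    intro x hx
    have h1 : ‖gradient v x - a‖ ≤ 2*‖a‖ + 2*μ := by
      refine (norm_sub_le _ _).trans ?_
      have := hgrad x hx
      linarith
    rw [abs_of_nonneg (sq_nonneg _)]
    nlinarith [norm_nonneg (gradient v x - a)]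
  have hRmeas : Measurable (fun x : E2 => ‖a‖^2 - fderiv ℝ v x a) :=
    measurable_const.sub (measurable_fderiv_apply_const ℝ v a)
  have hRint : IntegrableOn (fun x : E2 => ‖a‖^2 - fderiv ℝ v x a) (Metric.ball (0:E2) 1) := by
    refine aux_integrableOn_of_bound measurableSet_ball hvolB hRmeas
      (‖a‖^2 + (‖a‖ + 2*μ)*‖a‖) ?_
    intro x hx
    have hb := hfd x hx a
    rw [abs_le] at hb ⊢
    constructor <;> nlinarith [sq_nonneg ‖a‖, hb.1, hb.2]
  have hint2 : ∫ x in Metric.ball (0:E2) 1, ‖gradient v x - a‖^2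
      ≤ ∫ x in Metric.ball (0:E2) 1, ((4*μ*‖a‖ + 4*μ^2) + 2*(‖a‖^2 - fderiv ℝ v x a)) := by
    refine setIntegral_mono_on hqint ?_ measurableSet_ball hptw
    exact (integrableOn_const hvolB.ne).add (hRint.const_mul 2)
  have hsplit : ∫ x in Metric.ball (0:E2) 1, ((4*μ*‖a‖ + 4*μ^2) + 2*(‖a‖^2 - fderiv ℝ v x a))
      = (4*μ*‖a‖ + 4*μ^2)*π + 2*(∫ x in Metric.ball (0:E2) 1, (‖a‖^2 - fderiv ℝ v x a)) := by
    rw [integral_add (show Integrable (fun _ : E2 => 4*μ*‖a‖ + 4*μ^2)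
      (volume.restrict (Metric.ball (0:E2) 1)) from integrableOn_const hvolB.ne) (hRint.const_mul 2)]
    rw [setIntegral_const, integral_const_mul, measureReal_def, hvolR, smul_eq_mul]
    ring
  have hfinal : ∫ x in Metric.ball (0:E2) 1, ‖gradient v x - a‖^2
      ≤ (4*μ*‖a‖ + 4*μ^2)*π + 8*μ*‖a‖ := by
    rw [hsplit] at hint2
    linarith
  rw [setAverage_eq, measureReal_def, hvolR, smul_eq_mul]
  have hπ0 : (0:ℝ) < π := Real.pi_pos
  calc π⁻¹ * ∫ x in Metric.ball (0:E2) 1, ‖gradient v x - a‖^2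
      ≤ π⁻¹ * ((4*μ*‖a‖ + 4*μ^2)*π + 8*μ*‖a‖) := by
        exact mul_le_mul_of_nonneg_left hfinal (inv_nonneg.mpr hπ0.le)
    _ = (4*μ*‖a‖ + 4*μ^2) + π⁻¹*(8*μ*‖a‖) := by
        field_simp
    _ ≤ 20 * μ * (‖a‖ + μ) := by
        have h1 : π⁻¹*(8*μ*‖a‖) ≤ (8/3)*(μ*‖a‖) := by
          have h2 : π⁻¹ ≤ 1/3 := by
            rw [inv_le_comm₀ (by linarith) (by norm_num)]
            linarith
          have h3 : (0:ℝ) ≤ 8*μ*‖a‖ := by positivity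
          nlinarith
        nlinarith [mul_nonneg hμ ha0, sq_nonneg μ, mul_nonneg hμ hμ]
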